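/- The map Ψ₊ from directions at infinity to the real sphere, given in the β-coordinate by Ψ₊(β) = (θ₊(β), φ₊(β)) with θ₊(β) = 2 arctan(|e^{iβ}|) and φ₊(β) = Re(β) − π/2, produces a point x = (sin θ₊ cos φ₊, sin θ₊ sin φ₊, cos θ₊) ∈ S² satisfying x·η(β) = 0, where η(β) = (cos β, sin β, i). -/

import Mathlib

open Real Complex

/-- The map Ψ₊, given in the β-coordinate by θ₊(β) = 2 arctan |e^{iβ}| and
φ₊(β) = Re β − π/2, produces a point
x = (sin θ₊ cos φ₊, sin θ₊ sin φ₊, cos θ₊) of the real sphere satisfying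
x·η(β) = 0 with η(β) = (cos β, sin β, i). -/
theorem psi_plus_lands_on_characteristic (β : ℂ) :
    letI θp : ℝ := 2 * Real.arctan ‖Complex.exp (Complex.I * β)‖
    letI φp : ℝ := β.re - Real.pi / 2
    ((Real.sin θp * Real.cos φp : ℝ) : ℂ) * Complex.cos β
      + ((Real.sin θp * Real.sin φp : ℝ) : ℂ) * Complex.sin β
      + ((Real.cos θp : ℝ) : ℂ) * Complex.I = 0 ∧
    (Real.sin θp * Real.cos φp) ^ 2 + (Real.sin θp * Real.sin φp) ^ 2
      + (Real.cos θp) ^ 2 = 1 := by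
  set θp : ℝ := 2 * Real.arctan ‖Complex.exp (Complex.I * β)‖ with hθp
  set φp : ℝ := β.re - Real.pi / 2 with hφp
  have ht : ‖Complex.exp (Complex.I * β)‖ = Real.exp (-β.im) := by
    rw [Complex.norm_exp]; congr 1; simp [Complex.mul_re]
  set t := Real.exp (-β.im) with htdef
  have ht0 : 0 < t := Real.exp_pos _
  have h1 : (0:ℝ) < 1 + t^2 := by positivity
  have hsq : Real.sqrt (1 + t^2) * Real.sqrt (1 + t^2) = 1 + t^2 :=
    Real.mul_self_sqrt (by positivity)
  have hθ : θp = 2 * Real.arctan t := by rw [hθp, ht]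
  have hs : Real.sin θp = 2*t/(1+t^2) := by
    rw [hθ, Real.sin_two_mul, Real.sin_arctan, Real.cos_arctan]
    rw [show (1:ℝ) + t^2 = Real.sqrt (1+t^2) * Real.sqrt (1+t^2) from hsq.symm]
    have h2 : (0:ℝ) < Real.sqrt (1+t^2) := Real.sqrt_pos.mpr h1
    field_simp
    rw [Real.sq_sqrt (sq_nonneg (Real.sqrt (1+t^2)))]
  have hc : Real.cos θp = (1-t^2)/(1+t^2) := by
    rw [hθ, Real.cos_two_mul, Real.cos_arctan]
    have h2 : (0:ℝ) < Real.sqrt (1+t^2) := Real.sqrt_pos.mpr h1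
    rw [div_pow, one_pow, Real.sq_sqrt (by positivity : (0:ℝ) ≤ 1 + t^2)]
    field_simp
    ring
  have hsinh : Real.sinh β.im = (1/t - t)/2 := by
    rw [Real.sinh_eq, htdef, Real.exp_neg]
    field_simp
  have key : Real.cos θp = Real.sin θp * Real.sinh β.im := by
    rw [hs, hc, hsinh]
    field_simp
  constructor
  · have hcφ : Real.cos φp = Real.sin β.re := by
      rw [hφp, Real.cos_sub_pi_div_two]
    have hsφ : Real.sin φp = -Real.cos β.re := by
      rw [hφp, Real.sin_sub_pi_div_two]
    rw [hcφ, hsφ]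
    have hβ : (β.re : ℂ) - β = -(β.im : ℂ) * Complex.I := by
      simp [Complex.ext_iff]
    have hsin : (Real.sin β.re : ℂ) * Complex.cos β
        - (Real.cos β.re : ℂ) * Complex.sin β = Complex.sin ((β.re : ℂ) - β) := by
      rw [Complex.sin_sub, Complex.ofReal_sin, Complex.ofReal_cos]
    have h2 : Complex.sin ((β.re : ℂ) - β) = -(Real.sinh β.im : ℂ) * Complex.I := by
      rw [hβ, neg_mul, Complex.sin_neg, Complex.sin_mul_I, Complex.ofReal_sinh]; ring
    have h3 : (Real.sin β.re : ℂ) * Complex.cos β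
        - (Real.cos β.re : ℂ) * Complex.sin β = -(Real.sinh β.im : ℂ) * Complex.I := by
      rw [hsin, h2]
    have hkey : (Real.cos θp : ℂ) = (Real.sin θp : ℂ) * (Real.sinh β.im : ℂ) := by
      rw [key, Complex.ofReal_mul]
    simp only [Complex.ofReal_mul, Complex.ofReal_neg]
    linear_combination (Real.sin θp : ℂ) * h3 + Complex.I * hkey
  · nlinarith [Real.sin_sq_add_cos_sq φp, Real.sin_sq_add_cos_sq θp]
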